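/- Every finite-index subgroup of the additive group Z[1/p] has the form a·Z[1/p] for some positive integer a coprime to p, and its index equals a. -/

import Mathlib

/-- The additive subgroup `ℤ[1/p]` of `ℚ`: rationals with denominator a power of `p`. -/
def Zp (p : ℕ) : AddSubgroup ℚ :=
  AddSubgroup.closure {x : ℚ | ∃ k : ℕ, x = 1 / (p : ℚ) ^ k}

lemma mem_Zp_iff {p : ℕ} (hp : p ≠ 0) {x : ℚ} :
    x ∈ Zp p ↔ ∃ (m : ℤ) (k : ℕ), x = (m : ℚ) / (p : ℚ) ^ k := by
  have hp0 : (p : ℚ) ≠ 0 := Nat.cast_ne_zero.mpr hp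
  constructor
  · intro h
    induction h using AddSubgroup.closure_induction with
    | mem x hx => obtain ⟨k, rfl⟩ := hx; exact ⟨1, k, by push_cast; ring⟩
    | zero => exact ⟨0, 0, by norm_num⟩
    | add x y hx hy ihx ihy =>
        obtain ⟨m, k, rfl⟩ := ihx
        obtain ⟨m', k', rfl⟩ := ihy
        exact ⟨m * p ^ k' + m' * p ^ k, k + k', by push_cast; rw [pow_add]; field_simp⟩
    | neg x hx ihx =>
        obtain ⟨m, k, rfl⟩ := ihx
        exact ⟨-m, k, by push_cast; ring⟩
  · rintro ⟨m, k, rfl⟩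
    have h1 : (1 : ℚ) / (p : ℚ) ^ k ∈ Zp p := AddSubgroup.subset_closure ⟨k, rfl⟩
    have := AddSubgroup.zsmul_mem _ h1 m
    simpa [zsmul_eq_mul, mul_one_div, div_eq_mul_inv] using this

theorem finite_index_subgroups_of_Zp (p : ℕ) (hp : p.Prime)
    (H : AddSubgroup ℚ) (hH : H ≤ Zp p) (hfin : H.relIndex (Zp p) ≠ 0) :
    ∃ a : ℕ, 0 < a ∧ Nat.Coprime a p ∧
      (∀ x : ℚ, x ∈ H ↔ ∃ y ∈ Zp p, x = (a : ℚ) * y) ∧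
      H.relIndex (Zp p) = a := by
  have hpne : p ≠ 0 := hp.pos.ne'
  have hp0 : (p : ℚ) ≠ 0 := Nat.cast_ne_zero.mpr hpne
  set n := H.relIndex (Zp p) with hn
  -- step 1: n • x ∈ H for x ∈ Zp p
  have key : ∀ x ∈ Zp p, (n : ℚ) * x ∈ H := by
    intro x hx
    have h1 : (H.addSubgroupOf (Zp p)).index • (⟨x, hx⟩ : Zp p) ∈ H.addSubgroupOf (Zp p) :=
      AddSubgroup.nsmul_index_mem _ _
    rw [AddSubgroup.mem_addSubgroupOf] at h1
    have h2 : ((((H.addSubgroupOf (Zp p)).index • (⟨x, hx⟩ : Zp p)) : Zp p) : ℚ)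
        = (n : ℚ) * x := by
      push_cast
      rw [nsmul_eq_mul]
      rfl
    rwa [h2] at h1
  set k0 := n.factorization p with hk0
  set a := n / p ^ k0 with ha
  have hnn : n ≠ 0 := hfin
  have hapos : 0 < a := Nat.ordCompl_pos p hnn
  have hacop : Nat.Coprime a p := (Nat.coprime_ordCompl hp hnn).symm
  have hna : n = p ^ k0 * a := (Nat.ordProj_mul_ordCompl_eq_self n p).symm
  -- step 2 : a • Zp ⊆ H
  have haH : ∀ x ∈ Zp p, (a : ℚ) * x ∈ H := by
    intro x hx
    obtain ⟨m, j, rfl⟩ := (mem_Zp_iff hpne).mp hx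
    have h1 : ((m : ℚ) / (p : ℚ) ^ (j + k0)) ∈ Zp p := (mem_Zp_iff hpne).mpr ⟨m, j + k0, rfl⟩
    have h2 := key _ h1
    have h3 : (n : ℚ) * ((m : ℚ) / (p : ℚ) ^ (j + k0)) = (a : ℚ) * ((m : ℚ) / (p : ℚ) ^ j) := by
      rw [hna]; push_cast; field_simp; ring
    rwa [h3] at h2
  -- step 3 : integers in H
  obtain ⟨g, hg⟩ := Int.subgroup_cyclic (AddSubgroup.comap (Int.castAddHom ℚ) H)
  have hKmem : ∀ m : ℤ, (m : ℚ) ∈ H ↔ g ∣ m := by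
    intro m
    have : (m : ℚ) ∈ H ↔ m ∈ AddSubgroup.comap (Int.castAddHom ℚ) H := Iff.rfl
    rw [this, hg, AddSubgroup.mem_closure_singleton]
    constructor
    · rintro ⟨c, rfl⟩; exact ⟨c, by rw [smul_eq_mul]; ring⟩
    · rintro ⟨c, rfl⟩; exact ⟨c, by rw [smul_eq_mul]; ring⟩
  have h1Zp : (1 : ℚ) ∈ Zp p := (mem_Zp_iff hpne).mpr ⟨1, 0, by norm_num⟩
  have haZ : ((a : ℤ) : ℚ) ∈ H := by
    have := haH 1 h1Zp
    rw [mul_one] at this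
    exact_mod_cast this
  have hga : g ∣ (a : ℤ) := (hKmem a).mp haZ
  set b := g.natAbs with hb
  have hgne : g ≠ 0 := by
    rintro rfl
    rw [zero_dvd_iff] at hga
    exact hapos.ne' (by exact_mod_cast hga)
  have hbpos : 0 < b := Int.natAbs_pos.mpr hgne
  have hba : b ∣ a := by
    have : (b : ℤ) ∣ (a : ℤ) := Int.natAbs_dvd.mpr hga
    exact_mod_cast this
  have hbcop : Nat.Coprime b p := Nat.Coprime.coprime_dvd_left hba hacop
  have hKb : ∀ m : ℤ, (m : ℚ) ∈ H ↔ (b : ℤ) ∣ m := fun m =>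
    (hKmem m).trans (Int.natAbs_dvd).symm
  -- Bezout
  have bez : ∀ j : ℕ, ∃ u v : ℤ, (1 : ℤ) = (p : ℤ) ^ j * u + (a : ℤ) * v := by
    intro j
    have hg1 : Nat.gcd (p ^ j) a = 1 := Nat.Coprime.pow_left j hacop.symm
    have h := Nat.gcd_eq_gcd_ab (p ^ j) a
    rw [hg1] at h
    exact ⟨Nat.gcdA (p ^ j) a, Nat.gcdB (p ^ j) a, by push_cast at h ⊢; linarith⟩
  -- key computation: m/p^j - m*u ∈ H (multiple of a in Zp)
  have hsub : ∀ (m u v : ℤ) (j : ℕ), (1 : ℤ) = (p : ℤ) ^ j * u + (a : ℤ) * v →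
      (m : ℚ) / (p : ℚ) ^ j - ((m * u : ℤ) : ℚ) ∈ H := by
    intro m u v j huv
    have h2 : (a : ℚ) * (((m * v : ℤ) : ℚ) / (p : ℚ) ^ j) ∈ H :=
      haH _ ((mem_Zp_iff hpne).mpr ⟨m * v, j, rfl⟩)
    have heq : (m : ℚ) / (p : ℚ) ^ j - ((m * u : ℤ) : ℚ)
        = (a : ℚ) * (((m * v : ℤ) : ℚ) / (p : ℚ) ^ j) := by
      have huvq : (1 : ℚ) = (p : ℚ) ^ j * (u : ℚ) + (a : ℚ) * (v : ℚ) := by exact_mod_cast huv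
      field_simp
      push_cast
      linear_combination (m : ℚ) * huvq
    rw [heq]; exact h2
  -- step 4 : membership characterization
  have hforward : ∀ x ∈ H, ∃ y ∈ Zp p, x = (b : ℚ) * y := by
    intro x hx
    obtain ⟨m, j, rfl⟩ := (mem_Zp_iff hpne).mp (hH hx)
    obtain ⟨u, v, huv⟩ := bez j
    have h1 : ((m * u : ℤ) : ℚ) ∈ H := by
      have := H.sub_mem hx (hsub m u v j huv)
      simpa using this
    have hdvd : (b : ℤ) ∣ m * u := (hKb _).mp h1
    have hbu : IsCoprime (b : ℤ) u := by
      obtain ⟨t, ht⟩ := hba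
      have hti : (a : ℤ) = (b : ℤ) * (t : ℤ) := by exact_mod_cast ht
      exact ⟨(t : ℤ) * v, (p : ℤ) ^ j, by linear_combination -huv - v * hti⟩
    have hbm : (b : ℤ) ∣ m := hbu.dvd_of_dvd_mul_right hdvd
    obtain ⟨m', rfl⟩ := hbm
    refine ⟨(m' : ℚ) / (p : ℚ) ^ j, (mem_Zp_iff hpne).mpr ⟨m', j, rfl⟩, ?_⟩
    push_cast
    field_simp
  have hbackward : ∀ y ∈ Zp p, (b : ℚ) * y ∈ H := by
    intro y hy
    obtain ⟨m, j, rfl⟩ := (mem_Zp_iff hpne).mp hy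
    obtain ⟨u, v, huv⟩ := bez j
    have h1 : (((b * m) * u : ℤ) : ℚ) ∈ H := (hKb _).mpr ⟨m * u, by ring⟩
    have h2 := hsub (b * m) u v j huv
    have h3 := H.add_mem h2 h1
    have heq : ((b * m : ℤ) : ℚ) / (p : ℚ) ^ j = (b : ℚ) * ((m : ℚ) / (p : ℚ) ^ j) := by
      push_cast; field_simp
    rw [sub_add_cancel, heq] at h3
    exact h3
  -- step 5 : index computation
  haveI : NeZero b := ⟨hbpos.ne'⟩
  have intZp : ∀ m : ℤ, ((m : ℚ)) ∈ Zp p := fun m => (mem_Zp_iff hpne).mpr ⟨m, 0, by norm_num⟩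
  have hcard : Nat.card (Zp p ⧸ H.addSubgroupOf (Zp p)) = b := by
    have hfun : Function.Bijective
        (fun r : ZMod b => (QuotientAddGroup.mk ⟨((r.val : ℤ) : ℚ), intZp _⟩ :
          Zp p ⧸ H.addSubgroupOf (Zp p))) := by
      constructor
      · intro r s hrs
        simp only [QuotientAddGroup.eq] at hrs
        rw [AddSubgroup.mem_addSubgroupOf] at hrs
        have h1 : (((s.val : ℤ) - (r.val : ℤ) : ℤ) : ℚ) ∈ H := by
          convert hrs using 1
          push_cast
          ring
        have hdvd := (hKb _).mp h1
        have h2 : (((s.val : ℤ)) : ZMod b) = (((r.val : ℤ)) : ZMod b) := by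
          rw [← sub_eq_zero, ← Int.cast_sub]
          exact (ZMod.intCast_zmod_eq_zero_iff_dvd _ _).mpr hdvd
        have h3 : ((s.val : ℕ) : ZMod b) = ((r.val : ℕ) : ZMod b) := by exact_mod_cast h2
        rwa [ZMod.natCast_val, ZMod.natCast_val, ZMod.cast_id, ZMod.cast_id, eq_comm] at h3
      · intro x
        induction x using QuotientAddGroup.induction_on with
        | H z =>
          obtain ⟨m, j, hmj⟩ := (mem_Zp_iff hpne).mp z.2
          obtain ⟨u, v, huv⟩ := bez j
          refine ⟨((m * u : ℤ) : ZMod b), ?_⟩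
          rw [QuotientAddGroup.eq, AddSubgroup.mem_addSubgroupOf]
          set w : ℤ := (((m * u : ℤ) : ZMod b).val : ℤ) with hw
          have hw1 : ((w : ℤ) : ZMod b) = ((m * u : ℤ) : ZMod b) := by
            rw [hw]
            push_cast
            rw [ZMod.natCast_val, ZMod.cast_id]
          have hw2 : (b : ℤ) ∣ m * u - w := by
            rw [← ZMod.intCast_zmod_eq_zero_iff_dvd, Int.cast_sub, hw1, sub_self]
          have h4 : ((m * u - w : ℤ) : ℚ) ∈ H := (hKb _).mpr hw2
          have h5 := hsub m u v j huv
          have h6 := H.add_mem h5 h4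
          have h7 : ((z : ℚ) - (w : ℚ)) ∈ H := by
            convert h6 using 1
            rw [hmj]
            push_cast
            ring
          convert h7 using 1
          push_cast
          ring
    calc Nat.card (Zp p ⧸ H.addSubgroupOf (Zp p))
        = Nat.card (ZMod b) := (Nat.card_congr (Equiv.ofBijective _ hfun)).symm
      _ = b := Nat.card_zmod b
  refine ⟨b, hbpos, hbcop, ?_, ?_⟩
  · intro x
    constructor
    · exact fun hx => hforward x hx
    · rintro ⟨y, hy, rfl⟩
      exact hbackward y hy
  · rw [hn, AddSubgroup.relIndex, AddSubgroup.index, hcard]
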